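/- For positive integers d and r, the signed polysymmetric elementary function has the power-sum expansion E_{d^r} = Σ_{τ ⊩ d} (−1)^{ℓ(τ)} p^⊗_{τ^r} / z^⊗_τ, where ℓ(τ) is the number of distinct blocks (counted with multiplicity) of the type τ. -/

import Mathlib

open Classical

/- Polysymmetric setting: variables `x_{k,j}` indexed by `(k, j) : ℕ+ × ℕ` with
`deg x_{k,j} = k`.  A type is a multiset of blocks `(k, m) : ℕ+ × ℕ+`. -/

/-- Weighted degree of a monomial. -/
noncomputable def wdeg (e : ℕ+ × ℕ →₀ ℕ) : ℕ := e.sum fun v m => (v.1 : ℕ) * m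

/-- `E_d`: the signed sum of all square-free monomials of weighted degree `d`,
a product of `s` distinct variables carrying sign `(−1)^s`. -/
noncomputable def EE (d : ℕ) : MvPowerSeries (ℕ+ × ℕ) ℚ :=
  fun e => if (∀ v, e v ≤ 1) ∧ wdeg e = d then (-1 : ℚ) ^ e.support.card else 0

/-- Substitution of every variable by its `r`-th power. -/
noncomputable def powSub (r : ℕ) (f : MvPowerSeries (ℕ+ × ℕ) ℚ) :
    MvPowerSeries (ℕ+ × ℕ) ℚ :=
  fun e => if ∀ v, r ∣ e v then f (e.mapRange (· / r) (Nat.zero_div r)) else 0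

/-- `p_n(x_{k*}) = Σ_{j≥1} x_{k,j}^n`. -/
noncomputable def pIn (k : ℕ+) (n : ℕ) : MvPowerSeries (ℕ+ × ℕ) ℚ :=
  fun e => if ∃ j, e = Finsupp.single (k, j) n then 1 else 0

/-- The weight of a type. -/
noncomputable def wtT (τ : Multiset (ℕ+ × ℕ+)) : ℕ :=
  (τ.map fun b => (b.1 : ℕ) * (b.2 : ℕ)).sum

/-- `τ|_k`: the partition formed by the multiplicities of the degree-`k` blocks of `τ`. -/
noncomputable def restrict (τ : Multiset (ℕ+ × ℕ+)) (k : ℕ+) : Multiset ℕ :=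
  (τ.filter fun b => b.1 = k).map fun b => (b.2 : ℕ)

/-- `z_λ = Π_i i^{m_i(λ)} m_i(λ)!`. -/
noncomputable def zMult (lam : Multiset ℕ) : ℚ :=
  ∏ i ∈ lam.toFinset, (i : ℚ) ^ lam.count i * (Nat.factorial (lam.count i) : ℚ)

/-- `z^⊗_τ = Π_{k≥1} z_{τ|_k}`. -/
noncomputable def zT (τ : Multiset (ℕ+ × ℕ+)) : ℚ :=
  ∏ᶠ k : ℕ+, zMult (restrict τ k)

/-- `p^⊗_{τ^r}`: the pure tensor power sum of the type `τ^r` obtained from `τ`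
by scaling every block multiplicity by `r`. -/
noncomputable def pTr (τ : Multiset (ℕ+ × ℕ+)) (r : ℕ) : MvPowerSeries (ℕ+ × ℕ) ℚ :=
  ∏ᶠ k : ℕ+, ((restrict τ k).map fun m => pIn k (r * m)).prod

section Aux
open Finsupp

abbrev VV := ℕ+ × ℕ
abbrev BB := ℕ+ × ℕ+

lemma coeff_eq (f : MvPowerSeries VV ℚ) (e : VV →₀ ℕ) : f e = MvPowerSeries.coeff e f := rfl

lemma wdeg_add (a b : VV →₀ ℕ) : wdeg (a + b) = wdeg a + wdeg b :=
  Finsupp.sum_add_index' (fun v => by simp) (fun v m n => by ring)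

lemma wdeg_single (v : VV) (n : ℕ) : wdeg (Finsupp.single v n) = (v.1 : ℕ) * n :=
  Finsupp.sum_single_index (by simp)

lemma sub_single_add (e : VV →₀ ℕ) (v : VV) (n : ℕ) (h : n ≤ e v) :
    (e - Finsupp.single v n) + Finsupp.single v n = e := by
  ext w
  by_cases hw : w = v
  · subst hw; simp [Finsupp.tsub_apply]; omega
  · simp [Finsupp.tsub_apply, Finsupp.single_apply, Ne.symm hw, hw]

lemma wdeg_sub_single (e : VV →₀ ℕ) (v : VV) (n : ℕ) (h : n ≤ e v) :
    wdeg (e - Finsupp.single v n) + (v.1 : ℕ) * n = wdeg e := by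
  conv_rhs => rw [← sub_single_add e v n h]
  rw [wdeg_add, wdeg_single]

lemma sub_single_apply (e : VV →₀ ℕ) (v w : VV) (n : ℕ) :
    (e - Finsupp.single v n) w = e w - (if v = w then n else 0) := by
  rw [Finsupp.tsub_apply, Finsupp.single_apply]

lemma support_sub_single_self (e : VV →₀ ℕ) (v : VV) :
    (e - Finsupp.single v (e v)).support = e.support.erase v := by
  ext w
  by_cases hw : w = v
  · subst hw; simp [Finsupp.mem_support_iff, sub_single_apply]
  · simp [Finsupp.mem_support_iff, sub_single_apply, Ne.symm hw, hw]

lemma support_sub_single_lt (e : VV →₀ ℕ) (v : VV) (n : ℕ) (h2 : n < e v) :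
    (e - Finsupp.single v n).support = e.support := by
  ext w
  by_cases hw : w = v
  · subst hw; simp [Finsupp.mem_support_iff, sub_single_apply]; omega
  · simp [Finsupp.mem_support_iff, sub_single_apply, Ne.symm hw]

lemma wdeg_eq_sum (e : VV →₀ ℕ) : wdeg e = ∑ v ∈ e.support, (v.1 : ℕ) * e v := rfl

lemma term_le_wdeg (e : VV →₀ ℕ) (v : VV) (hv : v ∈ e.support) :
    (v.1 : ℕ) * e v ≤ wdeg e := by
  rw [wdeg_eq_sum]
  exact Finset.single_le_sum (f := fun w => (w.1 : ℕ) * e w) (fun w _ => Nat.zero_le _) hv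

lemma wdeg_eq_zero (e : VV →₀ ℕ) (h : wdeg e = 0) : e = 0 := by
  ext v
  by_cases hv : v ∈ e.support
  · have := term_le_wdeg e v hv
    have hv' := Finsupp.mem_support_iff.mp hv
    have : (1:ℕ) * 1 ≤ (v.1:ℕ) * e v := Nat.mul_le_mul v.1.one_le (by omega)
    omega
  · simpa using Finsupp.notMem_support_iff.mp hv

end Aux
section Aux2
open Finsupp

lemma pIn_apply (k : ℕ+) (n : ℕ) (e : VV →₀ ℕ) :
    pIn k n e = if ∃ j, e = Finsupp.single (k, j) n then 1 else 0 := rfl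

lemma coeff_pIn_mul (k : ℕ+) (n : ℕ) (hn : 0 < n) (g : MvPowerSeries VV ℚ) (e : VV →₀ ℕ) :
    (pIn k n * g) e
      = ∑ v ∈ e.support.filter (fun v => v.1 = k ∧ n ≤ e v), g (e - Finsupp.single v n) := by
  rw [coeff_eq (pIn k n * g) e, MvPowerSeries.coeff_mul]
  have h1 : ∀ p : (VV →₀ ℕ) × (VV →₀ ℕ),
      MvPowerSeries.coeff p.1 (pIn k n) * MvPowerSeries.coeff p.2 g
        = if ∃ j, p.1 = Finsupp.single (k, j) n then g p.2 else 0 := by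
    intro p
    rw [← coeff_eq (pIn k n) p.1, ← coeff_eq g p.2, pIn_apply]
    split_ifs with h <;> simp
  rw [Finset.sum_congr rfl (fun p _ => h1 p), ← Finset.sum_filter]
  refine Finset.sum_bij' (i := ?_) (j := ?_) ?_ ?_ ?_ ?_ ?_
  · exact fun p hp => (k, ((Finset.mem_filter.mp hp).2).choose)
  · exact fun v hv => (Finsupp.single v n, e - Finsupp.single v n)
  · intro p hp
    obtain ⟨hp1, hp2⟩ := Finset.mem_filter.mp hp
    have hps := hp2.choose_spec
    set j := hp2.choose
    rw [Finset.HasAntidiagonal.mem_antidiagonal] at hp1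
    have he : e (k, j) = n + p.2 (k, j) := by
      rw [← hp1]; simp [hps]
    refine Finset.mem_filter.mpr ⟨Finsupp.mem_support_iff.mpr ?_, rfl, by omega⟩
    omega
  · intro v hv
    obtain ⟨hv1, hv2, hv3⟩ := Finset.mem_filter.mp hv
    refine Finset.mem_filter.mpr ⟨Finset.HasAntidiagonal.mem_antidiagonal.mpr (by
        ext w
        by_cases hw : w = v
        · subst hw; simp [Finsupp.tsub_apply]; omega
        · simp [Finsupp.tsub_apply, Finsupp.single_apply, Ne.symm hw, hw]), ?_⟩
    exact ⟨v.2, by rw [← hv2]⟩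
  · intro p hp
    obtain ⟨hp1, hp2⟩ := Finset.mem_filter.mp hp
    have hps := hp2.choose_spec
    rw [Finset.HasAntidiagonal.mem_antidiagonal] at hp1
    have h2 : p.2 = e - Finsupp.single (k, hp2.choose) n := by
      rw [← hps, ← hp1]
      ext w
      simp [Finsupp.tsub_apply]
    rw [Prod.ext_iff]
    exact ⟨by simp [← hps], by simp [← h2]⟩
  · intro v hv
    obtain ⟨hv1, hv2, hv3⟩ := Finset.mem_filter.mp hv
    have hmem : (Finsupp.single v n, e - Finsupp.single v n)
        ∈ (Finset.HasAntidiagonal.antidiagonal e).filter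
          (fun p => ∃ j, p.1 = Finsupp.single (k, j) n) := by
      refine Finset.mem_filter.mpr ⟨Finset.HasAntidiagonal.mem_antidiagonal.mpr (by
        ext w
        by_cases hw : w = v
        · subst hw; simp [Finsupp.tsub_apply]; omega
        · simp [Finsupp.tsub_apply, Finsupp.single_apply, Ne.symm hw, hw]), ⟨v.2, by rw [← hv2]⟩⟩
    -- i (j v) = v
    have hch := (Finset.mem_filter.mp hmem).2.choose_spec
    have : v = (k, (Finset.mem_filter.mp hmem).2.choose) := by
      apply (Finsupp.single_left_inj (show n ≠ 0 by omega)).mp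
      simpa using hch
    exact this.symm
  · intro p hp
    obtain ⟨hp1, hp2⟩ := Finset.mem_filter.mp hp
    have hps := hp2.choose_spec
    rw [Finset.HasAntidiagonal.mem_antidiagonal] at hp1
    congr 1
    rw [← hps, ← hp1]
    ext w
    simp [Finsupp.tsub_apply]

end Aux2
section Aux3

/-- Finset of pairs `(k,n)` of positive naturals with `k*n ≤ d`. -/
noncomputable def KN (d : ℕ) : Finset BB :=
  (Finset.Icc 1 d.toPNat' ×ˢ Finset.Icc 1 d.toPNat').filter
    fun p => (p.1 : ℕ) * (p.2 : ℕ) ≤ d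

lemma mem_KN {d : ℕ} {p : BB} : p ∈ KN d ↔ (p.1 : ℕ) * (p.2 : ℕ) ≤ d := by
  constructor
  · intro h; exact (Finset.mem_filter.mp h).2
  · intro h
    have hd : 0 < d := lt_of_lt_of_le (by positivity) h
    have h1 : (p.1 : ℕ) ≤ d := le_trans (Nat.le_mul_of_pos_right _ p.2.pos) h
    have h2 : (p.2 : ℕ) ≤ d := le_trans (Nat.le_mul_of_pos_left _ p.1.pos) h
    refine Finset.mem_filter.mpr ⟨Finset.mem_product.mpr ⟨?_, ?_⟩, h⟩ <;>
      rw [Finset.mem_Icc] <;>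
      exact ⟨PNat.one_le _, by rw [← PNat.coe_le_coe, PNat.toPNat'_coe hd]; assumption⟩

end Aux3
section Aux4

lemma EE_apply (d : ℕ) (e : VV →₀ ℕ) :
    EE d e = if (∀ v, e v ≤ 1) ∧ wdeg e = d then (-1 : ℚ) ^ e.support.card else 0 := rfl

lemma coeff_pIn_mul' (k : ℕ+) (n : ℕ+) (g : MvPowerSeries VV ℚ) (e : VV →₀ ℕ) :
    (pIn k (n : ℕ) * g) e
      = ∑ v ∈ e.support.filter (fun v => v.1 = k ∧ (n : ℕ) ≤ e v),
          g (e - Finsupp.single v (n : ℕ)) :=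
  coeff_pIn_mul k n n.pos g e

lemma double_reindex (d : ℕ) (e : VV →₀ ℕ) (G : BB → VV → ℚ) :
    ∑ p ∈ KN d, ∑ v ∈ e.support.filter (fun v => v.1 = p.1 ∧ (p.2 : ℕ) ≤ e v), G p v
      = ∑ v ∈ e.support,
          ∑ n ∈ (Finset.Icc 1 d.toPNat').filter
            (fun n : ℕ+ => (n : ℕ) ≤ e v ∧ (v.1 : ℕ) * (n : ℕ) ≤ d), G (v.1, n) v := by
  have eA : ∑ p ∈ KN d, ∑ v ∈ e.support.filter (fun v => v.1 = p.1 ∧ (p.2 : ℕ) ≤ e v), G p v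
      = ∑ q ∈ (KN d ×ˢ e.support).filter
          (fun q => q.2.1 = q.1.1 ∧ (q.1.2 : ℕ) ≤ e q.2), G q.1 q.2 := by
    rw [Finset.sum_filter, Finset.sum_product]
    exact Finset.sum_congr rfl fun p _ => Finset.sum_filter _ _
  have eB : (∑ v ∈ e.support,
        ∑ n ∈ (Finset.Icc 1 d.toPNat').filter
          (fun n : ℕ+ => (n : ℕ) ≤ e v ∧ (v.1 : ℕ) * (n : ℕ) ≤ d), G (v.1, n) v)
      = ∑ q ∈ (e.support ×ˢ Finset.Icc 1 d.toPNat').filter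
          (fun q => (q.2 : ℕ) ≤ e q.1 ∧ (q.1.1 : ℕ) * (q.2 : ℕ) ≤ d), G (q.1.1, q.2) q.1 := by
    rw [Finset.sum_filter, Finset.sum_product]
    exact Finset.sum_congr rfl fun v _ => Finset.sum_filter _ _
  rw [eA, eB]
  refine Finset.sum_nbij' (i := fun q => (q.2, q.1.2)) (j := fun q => ((q.1.1, q.2), q.1))
    ?_ ?_ ?_ ?_ ?_
  · intro q hq
    obtain ⟨hq1, hq2, hq3⟩ := Finset.mem_filter.mp hq
    obtain ⟨hkn, hvs⟩ := Finset.mem_product.mp hq1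
    refine Finset.mem_filter.mpr ⟨Finset.mem_product.mpr ⟨hvs, ?_⟩, hq3, ?_⟩
    · exact (Finset.mem_product.mp (Finset.mem_filter.mp hkn).1).2
    · rw [hq2]; exact mem_KN.mp hkn
  · intro q hq
    obtain ⟨hq1, hq2, hq3⟩ := Finset.mem_filter.mp hq
    obtain ⟨hvs, hn⟩ := Finset.mem_product.mp hq1
    exact Finset.mem_filter.mpr ⟨Finset.mem_product.mpr ⟨mem_KN.mpr hq3, hvs⟩, rfl, hq2⟩
  · intro q hq
    obtain ⟨hq1, hq2, hq3⟩ := Finset.mem_filter.mp hq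
    have : (q.2.1, q.1.2) = q.1 := Prod.ext hq2 rfl
    rw [Prod.ext_iff]
    exact ⟨this, rfl⟩
  · intro q hq; rfl
  · intro q hq
    obtain ⟨hq1, hq2, hq3⟩ := Finset.mem_filter.mp hq
    have : q.1 = (q.2.1, q.1.2) := Prod.ext hq2.symm rfl
    rw [← this]

end Aux4
section Aux5

lemma sf_sub (e : VV →₀ ℕ) (v : VV) (n : ℕ) (w : VV) :
    (e - Finsupp.single v n) w ≤ e w := by
  rw [sub_single_apply]; omega

lemma double_reindex' (d : ℕ) (e : VV →₀ ℕ) :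
    (∑ p ∈ KN d, ∑ v ∈ e.support.filter (fun v => v.1 = p.1 ∧ (p.2 : ℕ) ≤ e v),
        ((p.1 : ℕ) : ℚ) * EE (d - (p.1 : ℕ) * (p.2 : ℕ)) (e - Finsupp.single v (p.2 : ℕ)))
      = ∑ v ∈ e.support,
          ∑ n ∈ (Finset.Icc 1 d.toPNat').filter
            (fun n : ℕ+ => (n : ℕ) ≤ e v ∧ (v.1 : ℕ) * (n : ℕ) ≤ d),
            ((v.1 : ℕ) : ℚ) * EE (d - (v.1 : ℕ) * (n : ℕ)) (e - Finsupp.single v (n : ℕ)) := by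
  rw [double_reindex d e (fun p v =>
    ((p.1 : ℕ) : ℚ) * EE (d - (p.1 : ℕ) * (p.2 : ℕ)) (e - Finsupp.single v (p.2 : ℕ)))]

lemma E_rec (d : ℕ) :
    (d : ℚ) • EE d
      = - ∑ p ∈ KN d,
          ((p.1 : ℕ) : ℚ) • (pIn p.1 (p.2 : ℕ) * EE (d - (p.1 : ℕ) * (p.2 : ℕ))) := by
  apply MvPowerSeries.ext; intro e
  rw [map_smul, map_neg, map_sum]
  simp only [map_smul, smul_eq_mul, ← coeff_eq]
  simp only [coeff_pIn_mul', Finset.mul_sum]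
  rw [double_reindex' d e]
  by_cases hw : wdeg e = d
  · by_cases hsf : ∀ v, e v ≤ 1
    · -- squarefree case
      have hN : ∀ v ∈ e.support, (Finset.Icc 1 d.toPNat').filter
          (fun n : ℕ+ => (n : ℕ) ≤ e v ∧ (v.1 : ℕ) * (n : ℕ) ≤ d) = {1} := by
        intro v hv
        have hv1 : 1 ≤ e v := Nat.one_le_iff_ne_zero.mpr (Finsupp.mem_support_iff.mp hv)
        have hev : e v = 1 := le_antisymm (hsf v) hv1
        have hkd : (v.1 : ℕ) * 1 ≤ d := by
          rw [← hw, ← hev]; exact term_le_wdeg e v hv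
        have hd : 0 < d := lt_of_lt_of_le (by positivity) hkd
        apply Finset.ext; intro n
        simp only [Finset.mem_filter, Finset.mem_Icc, Finset.mem_singleton]
        constructor
        · rintro ⟨-, hn1, -⟩
          have hn' : (n : ℕ) = 1 := by have := n.pos; omega
          exact PNat.coe_injective (by simpa using hn')
        · rintro rfl
          refine ⟨⟨le_refl _, ?_⟩, by simpa using hv1, by simpa using hkd⟩
          rw [← PNat.coe_le_coe, PNat.toPNat'_coe hd]
          simp only [PNat.one_coe]
          omega
      have hterm : ∀ v ∈ e.support,
          ((v.1 : ℕ) : ℚ) * EE (d - (v.1 : ℕ)) (e - Finsupp.single v (1:ℕ))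
            = ((v.1 : ℕ) : ℚ) * (-1) ^ (e.support.card - 1) := by
        intro v hv
        have hv1 : 1 ≤ e v := Nat.one_le_iff_ne_zero.mpr (Finsupp.mem_support_iff.mp hv)
        have hev : e v = 1 := le_antisymm (hsf v) hv1
        have hwd := wdeg_sub_single e v 1 (by omega)
        have hkd : (v.1 : ℕ) * e v ≤ d := by rw [← hw]; exact term_le_wdeg e v hv
        rw [hev, mul_one] at hkd
        have hcond : (∀ w, (e - Finsupp.single v (1:ℕ)) w ≤ 1)
            ∧ wdeg (e - Finsupp.single v (1:ℕ)) = d - (v.1 : ℕ) := by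
          refine ⟨fun w => le_trans (sf_sub e v 1 w) (hsf w), ?_⟩
          omega
        have hsupp : (e - Finsupp.single v (1:ℕ)).support = e.support.erase v := by
          rw [show Finsupp.single v (1:ℕ) = Finsupp.single v (e v) by rw [hev]]
          exact support_sub_single_self e v
        rw [EE_apply, if_pos hcond, hsupp, Finset.card_erase_of_mem hv]
      have hstep : ∀ v ∈ e.support,
          (∑ n ∈ (Finset.Icc 1 d.toPNat').filter
            (fun n : ℕ+ => (n : ℕ) ≤ e v ∧ (v.1 : ℕ) * (n : ℕ) ≤ d),
            ((v.1 : ℕ) : ℚ) * EE (d - (v.1 : ℕ) * (n : ℕ)) (e - Finsupp.single v (n : ℕ)))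
          = ((v.1 : ℕ) : ℚ) * (-1) ^ (e.support.card - 1) := by
        intro v hv
        rw [hN v hv, Finset.sum_singleton]
        simpa using hterm v hv
      rw [Finset.sum_congr rfl hstep, ← Finset.sum_mul]
      have hsum : (∑ v ∈ e.support, ((v.1 : ℕ) : ℚ)) = (d : ℚ) := by
        rw [← hw, wdeg_eq_sum]
        push_cast
        refine Finset.sum_congr rfl fun v hv => ?_
        have hv1 : 1 ≤ e v := Nat.one_le_iff_ne_zero.mpr (Finsupp.mem_support_iff.mp hv)
        have hev : e v = 1 := le_antisymm (hsf v) hv1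
        simp [hev]
      rw [hsum, EE_apply, if_pos ⟨hsf, hw⟩]
      rcases Nat.eq_zero_or_pos e.support.card with hc | hc
      · have he0 : e = 0 := by
          ext v
          by_cases hv : v ∈ e.support
          · rw [Finset.card_eq_zero] at hc; rw [hc] at hv; simp at hv
          · simpa using Finsupp.notMem_support_iff.mp hv
        have hd0 : d = 0 := by rw [← hw, he0]; simp [wdeg]
        simp [hd0]
      · have hc' : e.support.card - 1 + 1 = e.support.card := by omega
        have hpow : (-1 : ℚ) ^ e.support.card = -(-1 : ℚ) ^ (e.support.card - 1) := by
          conv_lhs => rw [← hc']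
          rw [pow_succ]; ring
        rw [hpow]; ring
    · -- not squarefree : LHS is zero
      rw [EE_apply, if_neg (by tauto), mul_zero]
      push_neg at hsf
      obtain ⟨v₀, hv₀⟩ := hsf
      have hv₀2 : 2 ≤ e v₀ := by omega
      have hv₀s : v₀ ∈ e.support := Finsupp.mem_support_iff.mpr (by omega)
      by_cases huniq : ∀ w, w ≠ v₀ → e w ≤ 1
      · -- single bad variable
        have hzero : ∀ v ∈ e.support, v ≠ v₀ →
            (∑ n ∈ (Finset.Icc 1 d.toPNat').filter
              (fun n : ℕ+ => (n : ℕ) ≤ e v ∧ (v.1 : ℕ) * (n : ℕ) ≤ d),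
              ((v.1 : ℕ) : ℚ) * EE (d - (v.1 : ℕ) * (n : ℕ)) (e - Finsupp.single v (n : ℕ)))
            = 0 := by
          intro v hvs hvne
          apply Finset.sum_eq_zero
          intro n hn
          rw [EE_apply, if_neg, mul_zero]
          rintro ⟨hsf', -⟩
          have := hsf' v₀
          rw [sub_single_apply, if_neg hvne] at this
          omega
        rw [Finset.sum_eq_single_of_mem v₀ hv₀s hzero]
        have hkd : (v₀.1 : ℕ) * e v₀ ≤ d := by rw [← hw]; exact term_le_wdeg e v₀ hv₀s
        have hd : 0 < d := by
          have : 0 < (v₀.1 : ℕ) * e v₀ := by positivity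
          omega
        have h1 : ((e v₀ - 1).toPNat' : ℕ) = e v₀ - 1 := PNat.toPNat'_coe (by omega)
        have h2 : ((e v₀).toPNat' : ℕ) = e v₀ := PNat.toPNat'_coe (by omega)
        have hsub : ({(e v₀ - 1).toPNat', (e v₀).toPNat'} : Finset ℕ+) ⊆
            (Finset.Icc 1 d.toPNat').filter
              (fun n : ℕ+ => (n : ℕ) ≤ e v₀ ∧ (v₀.1 : ℕ) * (n : ℕ) ≤ d) := by
          intro n hn
          have hcoe : (n : ℕ) = e v₀ - 1 ∨ (n : ℕ) = e v₀ := by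
            rcases Finset.mem_insert.mp hn with h | h
            · left; rw [h, h1]
            · right; rw [Finset.mem_singleton.mp h, h2]
          have hna : (n : ℕ) ≤ e v₀ := by omega
          refine Finset.mem_filter.mpr ⟨Finset.mem_Icc.mpr ⟨n.one_le, ?_⟩, hna, ?_⟩
          · rw [← PNat.coe_le_coe, PNat.toPNat'_coe hd]
            calc (n : ℕ) ≤ e v₀ := hna
            _ ≤ (v₀.1 : ℕ) * e v₀ := Nat.le_mul_of_pos_left _ v₀.1.pos
            _ ≤ d := hkd
          · calc (v₀.1 : ℕ) * (n : ℕ) ≤ (v₀.1 : ℕ) * e v₀ := Nat.mul_le_mul_left _ hna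
            _ ≤ d := hkd
        have hvan : ∀ n ∈ (Finset.Icc 1 d.toPNat').filter
              (fun n : ℕ+ => (n : ℕ) ≤ e v₀ ∧ (v₀.1 : ℕ) * (n : ℕ) ≤ d),
            n ∉ ({(e v₀ - 1).toPNat', (e v₀).toPNat'} : Finset ℕ+) →
            ((v₀.1 : ℕ) : ℚ) * EE (d - (v₀.1 : ℕ) * (n : ℕ)) (e - Finsupp.single v₀ (n : ℕ))
              = 0 := by
          intro n hn hnot
          obtain ⟨hn1, hn2, hn3⟩ := Finset.mem_filter.mp hn
          have hnm1 : (n : ℕ) ≠ e v₀ - 1 := by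
            intro h
            exact hnot (Finset.mem_insert.mpr (Or.inl (PNat.coe_injective (by rw [h, h1]))))
          have hnm2 : (n : ℕ) ≠ e v₀ := by
            intro h
            exact hnot (Finset.mem_insert.mpr (Or.inr (Finset.mem_singleton.mpr
              (PNat.coe_injective (by rw [h, h2])))))
          rw [EE_apply, if_neg, mul_zero]
          rintro ⟨hsf', -⟩
          have := hsf' v₀
          rw [sub_single_apply, if_pos rfl] at this
          omega
        rw [← Finset.sum_subset hsub hvan, Finset.sum_pair (by
          intro h
          rw [h] at h1
          omega), h1, h2]
        have hcard : 0 < e.support.card := Finset.card_pos.mpr ⟨v₀, hv₀s⟩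
        have hE1 : EE (d - (v₀.1 : ℕ) * (e v₀ - 1)) (e - Finsupp.single v₀ (e v₀ - 1))
            = (-1 : ℚ) ^ e.support.card := by
          have hwd := wdeg_sub_single e v₀ (e v₀ - 1) (by omega)
          rw [EE_apply, if_pos, support_sub_single_lt e v₀ _ (by omega)]
          constructor
          · intro w
            by_cases hwv : w = v₀
            · subst hwv; rw [sub_single_apply, if_pos rfl]; omega
            · rw [sub_single_apply, if_neg (fun h => hwv h.symm)]
              exact huniq w hwv
          · omega
        have hE2 : EE (d - (v₀.1 : ℕ) * e v₀) (e - Finsupp.single v₀ (e v₀))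
            = (-1 : ℚ) ^ (e.support.card - 1) := by
          have hwd := wdeg_sub_single e v₀ (e v₀) (by omega)
          rw [EE_apply, if_pos, support_sub_single_self, Finset.card_erase_of_mem hv₀s]
          constructor
          · intro w
            by_cases hwv : w = v₀
            · subst hwv; rw [sub_single_apply, if_pos rfl]; omega
            · rw [sub_single_apply, if_neg (fun h => hwv h.symm)]
              exact huniq w hwv
          · omega
        rw [hE1, hE2]
        have hcc : e.support.card - 1 + 1 = e.support.card := by omega
        have hpow : (-1 : ℚ) ^ e.support.card = -(-1 : ℚ) ^ (e.support.card - 1) := by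
          conv_lhs => rw [← hcc]
          rw [pow_succ]; ring
        rw [hpow]; ring
      · -- two bad variables: everything vanishes
        push_neg at huniq
        obtain ⟨w₀, hw₀ne, hw₀⟩ := huniq
        rw [Finset.sum_eq_zero, neg_zero]
        intro v hv
        apply Finset.sum_eq_zero
        intro n hn
        rw [EE_apply, if_neg, mul_zero]
        rintro ⟨hsf', -⟩
        by_cases hvv : v = v₀
        · have := hsf' w₀
          rw [sub_single_apply, if_neg (fun h => hw₀ne (h.symm.trans hvv))] at this
          omega
        · have := hsf' v₀
          rw [sub_single_apply, if_neg hvv] at this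
          omega
  · -- wrong weighted degree : both sides vanish
    rw [EE_apply, if_neg (by tauto), mul_zero]
    rw [Finset.sum_eq_zero, neg_zero]
    intro v hv
    apply Finset.sum_eq_zero
    intro n hn
    obtain ⟨-, hn2, hn3⟩ := Finset.mem_filter.mp hn
    rw [EE_apply, if_neg, mul_zero]
    rintro ⟨-, hwd'⟩
    have := wdeg_sub_single e v (n : ℕ) hn2
    omega

end Aux5
section Aux6

/-- scaling down an exponent -/
noncomputable def sc (r : ℕ) (e : VV →₀ ℕ) : VV →₀ ℕ := e.mapRange (· / r) (Nat.zero_div r)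

lemma sc_apply (r : ℕ) (e : VV →₀ ℕ) (v : VV) : sc r e v = e v / r := Finsupp.mapRange_apply

lemma powSub_apply (r : ℕ) (f : MvPowerSeries VV ℚ) (e : VV →₀ ℕ) :
    powSub r f e = if ∀ v, r ∣ e v then f (sc r e) else 0 := rfl

lemma smul_sc (r : ℕ) (hr : 0 < r) (e : VV →₀ ℕ) (h : ∀ v, r ∣ e v) : r • sc r e = e := by
  ext v
  rw [Finsupp.smul_apply, sc_apply, smul_eq_mul]
  exact Nat.mul_div_cancel' (h v)

lemma sc_smul (r : ℕ) (hr : 0 < r) (e : VV →₀ ℕ) : sc r (r • e) = e := by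
  ext v
  rw [sc_apply, Finsupp.smul_apply, smul_eq_mul]
  exact Nat.mul_div_cancel_left _ hr

lemma powSub_add (r : ℕ) (f g : MvPowerSeries VV ℚ) :
    powSub r (f + g) = powSub r f + powSub r g := by
  apply MvPowerSeries.ext; intro e
  rw [map_add, ← coeff_eq, ← coeff_eq, ← coeff_eq, powSub_apply, powSub_apply, powSub_apply]
  split_ifs with h
  · rw [coeff_eq (f + g), map_add, ← coeff_eq, ← coeff_eq]
  · ring

lemma powSub_smul (r : ℕ) (c : ℚ) (f : MvPowerSeries VV ℚ) :
    powSub r (c • f) = c • powSub r f := by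
  apply MvPowerSeries.ext; intro e
  rw [map_smul, ← coeff_eq, ← coeff_eq, powSub_apply, powSub_apply, smul_eq_mul]
  split_ifs with h
  · rw [coeff_eq (c • f), map_smul, ← coeff_eq, smul_eq_mul]
  · ring

noncomputable def powSubL (r : ℕ) : MvPowerSeries VV ℚ →ₗ[ℚ] MvPowerSeries VV ℚ where
  toFun := powSub r
  map_add' := powSub_add r
  map_smul' := powSub_smul r

lemma powSub_one (r : ℕ) (hr : 0 < r) : powSub r (1 : MvPowerSeries VV ℚ) = 1 := by
  apply MvPowerSeries.ext; intro e
  rw [← coeff_eq, powSub_apply, MvPowerSeries.coeff_one]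
  by_cases he : e = 0
  · subst he
    rw [if_pos (fun v => by simp), if_pos rfl]
    have : sc r 0 = 0 := by ext v; simp [sc_apply]
    rw [this, coeff_eq (1 : MvPowerSeries VV ℚ), MvPowerSeries.coeff_one, if_pos rfl]
  · rw [if_neg he]
    split_ifs with h
    · have : sc r e ≠ 0 := by
        intro h0
        apply he
        ext v
        obtain ⟨q, hq⟩ := h v
        have h2 : sc r e v = 0 := by rw [h0]; simp
        rw [sc_apply, hq, Nat.mul_div_cancel_left _ hr] at h2
        subst h2
        simpa using hq
      rw [coeff_eq (1 : MvPowerSeries VV ℚ), MvPowerSeries.coeff_one, if_neg this]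
    · rfl

lemma powSub_mul (r : ℕ) (hr : 0 < r) (f g : MvPowerSeries VV ℚ) :
    powSub r (f * g) = powSub r f * powSub r g := by
  apply MvPowerSeries.ext; intro e
  rw [← coeff_eq, powSub_apply, MvPowerSeries.coeff_mul]
  have hterm : ∀ P : (VV →₀ ℕ) × (VV →₀ ℕ),
      MvPowerSeries.coeff P.1 (powSub r f) * MvPowerSeries.coeff P.2 (powSub r g)
        = if (∀ v, r ∣ P.1 v) ∧ (∀ v, r ∣ P.2 v) then f (sc r P.1) * g (sc r P.2) else 0 := by
    intro P
    rw [← coeff_eq, ← coeff_eq, powSub_apply, powSub_apply]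
    by_cases h1 : ∀ v, r ∣ P.1 v
    · by_cases h2 : ∀ v, r ∣ P.2 v
      · rw [if_pos h1, if_pos h2, if_pos ⟨h1, h2⟩]
      · rw [if_pos h1, if_neg h2, mul_zero, if_neg (fun hc : _ ∧ _ => h2 hc.2)]
    · rw [if_neg h1, zero_mul, if_neg (fun hc : _ ∧ _ => h1 hc.1)]
  rw [Finset.sum_congr rfl fun P _ => hterm P, ← Finset.sum_filter]
  split_ifs with h
  · -- e fully divisible
    rw [coeff_eq (f * g), MvPowerSeries.coeff_mul]
    refine (Finset.sum_nbij' (i := fun P => (sc r P.1, sc r P.2))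
      (j := fun p => (r • p.1, r • p.2)) ?_ ?_ ?_ ?_ ?_).symm
    · intro P hP
      obtain ⟨hP1, hP2, hP3⟩ := Finset.mem_filter.mp hP
      rw [Finset.HasAntidiagonal.mem_antidiagonal] at hP1
      apply Finset.HasAntidiagonal.mem_antidiagonal.mpr
      ext v
      rw [Finsupp.add_apply, sc_apply, sc_apply, sc_apply]
      obtain ⟨q1, hq1⟩ := hP2 v
      obtain ⟨q2, hq2⟩ := hP3 v
      have : e v = P.1 v + P.2 v := by rw [← hP1]; simp
      rw [this, hq1, hq2, ← Nat.mul_add, Nat.mul_div_cancel_left _ hr,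
        Nat.mul_div_cancel_left _ hr, Nat.mul_div_cancel_left _ hr]
    · intro p hp
      rw [Finset.HasAntidiagonal.mem_antidiagonal] at hp
      have hd1 : ∀ v, r ∣ (r • p.1) v := fun v => by
        rw [Finsupp.smul_apply, smul_eq_mul]; exact dvd_mul_right r _
      have hd2 : ∀ v, r ∣ (r • p.2) v := fun v => by
        rw [Finsupp.smul_apply, smul_eq_mul]; exact dvd_mul_right r _
      refine Finset.mem_filter.mpr ⟨Finset.HasAntidiagonal.mem_antidiagonal.mpr ?_, hd1, hd2⟩
      rw [← smul_add, hp]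
      exact smul_sc r hr e h
    · intro P hP
      obtain ⟨hP1, hP2, hP3⟩ := Finset.mem_filter.mp hP
      have e1 : r • sc r P.1 = P.1 := smul_sc r hr P.1 hP2
      have e2 : r • sc r P.2 = P.2 := smul_sc r hr P.2 hP3
      rw [Prod.ext_iff]
      exact ⟨e1, e2⟩
    · intro p hp
      rw [Prod.ext_iff]
      exact ⟨sc_smul r hr p.1, sc_smul r hr p.2⟩
    · intro P hP; rfl
  · -- e not fully divisible : RHS sum is empty-ish
    symm
    apply Finset.sum_eq_zero
    intro P hP
    obtain ⟨hP1, hP2, hP3⟩ := Finset.mem_filter.mp hP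
    rw [Finset.HasAntidiagonal.mem_antidiagonal] at hP1
    exact absurd (fun v => by
      have : e v = P.1 v + P.2 v := by rw [← hP1]; simp
      rw [this]
      exact Nat.dvd_add (hP2 v) (hP3 v)) h

lemma powSub_pIn (r : ℕ) (hr : 0 < r) (k : ℕ+) (n : ℕ) :
    powSub r (pIn k n) = pIn k (r * n) := by
  apply MvPowerSeries.ext; intro e
  rw [← coeff_eq, ← coeff_eq, powSub_apply, pIn_apply]
  by_cases hd : ∀ v, r ∣ e v
  · rw [if_pos hd, pIn_apply]
    congr 1
    apply propext
    constructor
    · rintro ⟨j, hj⟩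
      refine ⟨j, ?_⟩
      rw [← smul_sc r hr e hd, hj, Finsupp.smul_single, smul_eq_mul]
    · rintro ⟨j, hj⟩
      refine ⟨j, ?_⟩
      rw [hj]
      ext v
      rw [sc_apply, Finsupp.single_apply, Finsupp.single_apply]
      split_ifs
      · exact Nat.mul_div_cancel_left _ hr
      · exact Nat.zero_div r
  · rw [if_neg hd, eq_comm, pIn_apply, ite_eq_right_iff]
    rintro ⟨j, hj⟩
    refine absurd (fun v => ?_) hd
    rw [hj, Finsupp.single_apply]
    split_ifs
    · exact Dvd.intro _ rfl
    · exact dvd_zero r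

end Aux6
section Aux7

lemma restrict_zero (k : ℕ+) : restrict 0 k = 0 := rfl

lemma restrict_cons (b : BB) (τ : Multiset BB) (k : ℕ+) :
    restrict (b ::ₘ τ) k
      = if b.1 = k then (b.2 : ℕ) ::ₘ restrict τ k else restrict τ k := by
  unfold restrict
  rw [Multiset.filter_cons]
  split_ifs with h
  · rw [Multiset.map_add, Multiset.map_singleton, Multiset.singleton_add]
  · rw [Multiset.map_add, Multiset.map_zero, zero_add]

lemma zMult_zero : zMult 0 = 1 := by simp [zMult]

lemma zMult_cons (m : ℕ) (lam : Multiset ℕ) :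
    zMult (m ::ₘ lam) = (m : ℚ) * ((lam.count m : ℚ) + 1) * zMult lam := by
  unfold zMult
  rw [Multiset.toFinset_cons]
  by_cases hm : m ∈ lam
  · have hmf : m ∈ lam.toFinset := Multiset.mem_toFinset.mpr hm
    have hins : insert m lam.toFinset = lam.toFinset := Finset.insert_eq_self.mpr hmf
    rw [hins, ← Finset.mul_prod_erase _ _ hmf,
        ← Finset.mul_prod_erase _
          (fun i : ℕ => (i : ℚ) ^ lam.count i * (Nat.factorial (lam.count i) : ℚ)) hmf]
    have hprod : (∏ i ∈ lam.toFinset.erase m,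
          ((i : ℚ) ^ (m ::ₘ lam).count i * (Nat.factorial ((m ::ₘ lam).count i) : ℚ)))
        = ∏ i ∈ lam.toFinset.erase m,
          ((i : ℚ) ^ lam.count i * (Nat.factorial (lam.count i) : ℚ)) := by
      refine Finset.prod_congr rfl fun i hi => ?_
      rw [Multiset.count_cons_of_ne (Finset.ne_of_mem_erase hi)]
    rw [hprod, Multiset.count_cons_self, pow_succ, Nat.factorial_succ]
    push_cast
    ring
  · have hm' : m ∉ lam.toFinset := fun h => hm (Multiset.mem_toFinset.mp h)
    rw [Finset.prod_insert hm']
    have hc0 : lam.count m = 0 := Multiset.count_eq_zero.mpr hm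
    have hprod : (∏ i ∈ lam.toFinset,
          ((i : ℚ) ^ (m ::ₘ lam).count i * (Nat.factorial ((m ::ₘ lam).count i) : ℚ)))
        = ∏ i ∈ lam.toFinset,
          ((i : ℚ) ^ lam.count i * (Nat.factorial (lam.count i) : ℚ)) := by
      refine Finset.prod_congr rfl fun i hi => ?_
      rw [Multiset.count_cons_of_ne (by rintro rfl; exact hm' hi)]
    rw [hprod, Multiset.count_cons_self, hc0]
    norm_num

lemma count_restrict (τ : Multiset BB) (b : BB) :
    (restrict τ b.1).count (b.2 : ℕ) = τ.count b := by
  induction τ using Multiset.induction with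
  | empty => simp [restrict_zero]
  | cons a s ih =>
    rw [restrict_cons, Multiset.count_cons]
    by_cases hab : a.1 = b.1
    · rw [if_pos hab, Multiset.count_cons, ih]
      congr 1
      by_cases h2 : b = a
      · rw [if_pos (by rw [h2]), if_pos h2]
      · rw [if_neg (fun hc => h2 (Prod.ext (by rw [hab]) (PNat.coe_injective hc).symm).symm),
          if_neg h2]
    · rw [if_neg hab, ih, if_neg (fun hc => hab (by rw [hc])), add_zero]

lemma zT_zero : zT 0 = 1 := by
  unfold zT
  rw [finprod_congr (fun k => by rw [restrict_zero, zMult_zero])]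
  exact finprod_one

lemma pTr_zero (r : ℕ) : pTr 0 r = 1 := by
  unfold pTr
  rw [finprod_congr (fun k => by rw [restrict_zero, Multiset.map_zero, Multiset.prod_zero])]
  exact finprod_one

lemma zT_mulSupport (τ : Multiset BB) :
    (Function.mulSupport fun k => zMult (restrict τ k)).Finite := by
  apply Set.Finite.subset (τ.toFinset.image Prod.fst).finite_toSet
  intro k hk
  rw [Function.mem_mulSupport] at hk
  by_contra hks
  apply hk
  have h0 : restrict τ k = 0 := by
    unfold restrict
    rw [Multiset.filter_eq_nil.mpr fun b hb hbk =>
      hks (Finset.mem_coe.mpr (Finset.mem_image.mpr ⟨b, Multiset.mem_toFinset.mpr hb, hbk⟩))]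
    rfl
  rw [h0, zMult_zero]

lemma pTr_mulSupport (τ : Multiset BB) (r : ℕ) :
    (Function.mulSupport fun k =>
      ((restrict τ k).map fun m => pIn k (r * m)).prod).Finite := by
  apply Set.Finite.subset (τ.toFinset.image Prod.fst).finite_toSet
  intro k hk
  rw [Function.mem_mulSupport] at hk
  by_contra hks
  apply hk
  have h0 : restrict τ k = 0 := by
    unfold restrict
    rw [Multiset.filter_eq_nil.mpr fun b hb hbk =>
      hks (Finset.mem_coe.mpr (Finset.mem_image.mpr ⟨b, Multiset.mem_toFinset.mpr hb, hbk⟩))]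
    rfl
  rw [h0, Multiset.map_zero, Multiset.prod_zero]

lemma zT_cons (b : BB) (τ : Multiset BB) :
    zT (b ::ₘ τ) = ((b.2 : ℕ) : ℚ) * ((τ.count b : ℚ) + 1) * zT τ := by
  unfold zT
  have hfun : ∀ k, zMult (restrict (b ::ₘ τ) k)
      = (if k = b.1 then ((b.2 : ℕ) : ℚ) * ((τ.count b : ℚ) + 1) else 1)
          * zMult (restrict τ k) := by
    intro k
    rw [restrict_cons]
    by_cases h : b.1 = k
    · rw [if_pos h, if_pos h.symm, zMult_cons]
      subst h
      rw [count_restrict]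
    · rw [if_neg h, if_neg (fun hc => h hc.symm), one_mul]
  rw [finprod_congr hfun,
    finprod_mul_distrib
      (Set.Finite.subset (Set.finite_singleton b.1) (fun k hk => by
        rw [Function.mem_mulSupport] at hk
        by_contra hkb
        exact hk (if_neg hkb)))
      (zT_mulSupport τ),
    finprod_eq_single _ b.1 (fun k hk => if_neg hk), if_pos rfl]

lemma pTr_cons (b : BB) (τ : Multiset BB) (r : ℕ) :
    pTr (b ::ₘ τ) r = pIn b.1 (r * (b.2 : ℕ)) * pTr τ r := by
  unfold pTr
  have hfun : ∀ k, ((restrict (b ::ₘ τ) k).map fun m => pIn k (r * m)).prod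
      = (if k = b.1 then pIn b.1 (r * (b.2 : ℕ)) else 1)
          * ((restrict τ k).map fun m => pIn k (r * m)).prod := by
    intro k
    rw [restrict_cons]
    by_cases h : b.1 = k
    · rw [if_pos h, if_pos h.symm, Multiset.map_cons, Multiset.prod_cons]
      subst h
      rfl
    · rw [if_neg h, if_neg (fun hc => h hc.symm), one_mul]
  rw [finprod_congr hfun,
    finprod_mul_distrib
      (Set.Finite.subset (Set.finite_singleton b.1) (fun k hk => by
        rw [Function.mem_mulSupport] at hk
        by_contra hkb
        exact hk (if_neg hkb)))
      (pTr_mulSupport τ r),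
    finprod_eq_single _ b.1 (fun k hk => if_neg hk), if_pos rfl]

lemma zT_ne_zero (τ : Multiset BB) : zT τ ≠ 0 := by
  induction τ using Multiset.induction with
  | empty => rw [zT_zero]; norm_num
  | cons b s ih =>
    rw [zT_cons]
    apply mul_ne_zero (mul_ne_zero ?_ ?_) ih
    · have := b.2.pos
      positivity
    · positivity

lemma wtT_zero : wtT 0 = 0 := rfl

lemma wtT_cons (b : BB) (τ : Multiset BB) :
    wtT (b ::ₘ τ) = (b.1 : ℕ) * (b.2 : ℕ) + wtT τ := by
  unfold wtT
  rw [Multiset.map_cons, Multiset.sum_cons]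

lemma block_le_wtT (b : BB) (τ : Multiset BB) (h : b ∈ τ) :
    (b.1 : ℕ) * (b.2 : ℕ) ≤ wtT τ := by
  obtain ⟨s, rfl⟩ := Multiset.exists_cons_of_mem h
  rw [wtT_cons]
  omega

lemma card_le_wtT (τ : Multiset BB) : Multiset.card τ ≤ wtT τ := by
  induction τ using Multiset.induction with
  | empty => simp [wtT_zero]
  | cons b s ih =>
    rw [wtT_cons, Multiset.card_cons]
    have : 0 < (b.1 : ℕ) * (b.2 : ℕ) := by positivity
    omega

noncomputable def TsLe (d : ℕ) : Finset (Multiset BB) :=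
  ((d • ((Finset.Icc 1 d.toPNat' ×ˢ Finset.Icc 1 d.toPNat' : Finset BB)).val).powerset).toFinset

noncomputable def Ts (d : ℕ) : Finset (Multiset BB) := (TsLe d).filter fun τ => wtT τ = d

lemma mem_TsLe {d m : ℕ} (hm : m ≤ d) {τ : Multiset BB} (h : wtT τ = m) : τ ∈ TsLe d := by
  rw [TsLe, Multiset.mem_toFinset, Multiset.mem_powerset]
  apply Multiset.le_iff_count.mpr
  intro b
  rw [Multiset.count_nsmul]
  by_cases hb : b ∈ τ
  · have hw := block_le_wtT b τ hb
    have hpos : 0 < (b.1 : ℕ) * (b.2 : ℕ) := by positivity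
    have hd : 0 < d := by omega
    have hbF : b ∈ (Finset.Icc 1 d.toPNat' ×ˢ Finset.Icc 1 d.toPNat' : Finset BB) := by
      refine Finset.mem_product.mpr ⟨Finset.mem_Icc.mpr ⟨b.1.one_le, ?_⟩,
        Finset.mem_Icc.mpr ⟨b.2.one_le, ?_⟩⟩
      · rw [← PNat.coe_le_coe, PNat.toPNat'_coe hd]
        have := Nat.le_mul_of_pos_right (b.1 : ℕ) b.2.pos
        omega
      · rw [← PNat.coe_le_coe, PNat.toPNat'_coe hd]
        have := Nat.le_mul_of_pos_left (b.2 : ℕ) b.1.pos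
        omega
    rw [Multiset.count_eq_one_of_mem (Finset.nodup _) (Finset.mem_val.mpr hbF), mul_one]
    calc Multiset.count b τ ≤ Multiset.card τ := Multiset.count_le_card _ _
    _ ≤ wtT τ := card_le_wtT τ
    _ ≤ d := by omega
  · rw [Multiset.count_eq_zero.mpr hb]
    exact Nat.zero_le _

lemma mem_Ts {d : ℕ} {τ : Multiset BB} : τ ∈ Ts d ↔ wtT τ = d :=
  ⟨fun h => (Finset.mem_filter.mp h).2,
   fun h => Finset.mem_filter.mpr ⟨mem_TsLe (le_refl d) h, h⟩⟩

lemma sum_Ts {M : Type*} [AddCommMonoid M] {d m : ℕ} (hm : m ≤ d) (f : Multiset BB → M) :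
    ∑ τ ∈ (TsLe d).filter (fun τ => wtT τ = m), f τ = ∑ τ ∈ Ts m, f τ := by
  refine Finset.sum_congr (Finset.ext fun τ => ?_) (fun _ _ => rfl)
  rw [Finset.mem_filter, mem_Ts]
  exact ⟨And.right, fun h => ⟨mem_TsLe hm h, h⟩⟩

lemma Ts_zero : Ts 0 = {0} := by
  apply Finset.ext; intro τ
  rw [mem_Ts, Finset.mem_singleton]
  constructor
  · intro h
    have := card_le_wtT τ
    rw [h] at this
    exact Multiset.card_eq_zero.mp (by omega)
  · rintro rfl; rfl

end Aux7
section Aux8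

/-- summand of the tensor power-sum expansion -/
noncomputable def wS (r : ℕ) (τ : Multiset BB) : MvPowerSeries VV ℚ :=
  ((-1 : ℚ) ^ (Multiset.card τ) * (zT τ)⁻¹) • pTr τ r

/-- RHS of the theorem as a finite sum -/
noncomputable def Rr (r d : ℕ) : MvPowerSeries VV ℚ := ∑ τ ∈ Ts d, wS r τ

lemma key (r : ℕ) (b : BB) (τ : Multiset BB) :
    (((τ.count b + 1) * ((b.1 : ℕ) * (b.2 : ℕ)) : ℕ) : ℚ) • wS r (b ::ₘ τ)
      = (-(((b.1 : ℕ)) : ℚ)) • (pIn b.1 (r * (b.2 : ℕ)) * wS r τ) := by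
  unfold wS
  rw [pTr_cons, zT_cons, Multiset.card_cons, mul_smul_comm, smul_smul, smul_smul]
  congr 1
  have h1 : zT τ ≠ 0 := zT_ne_zero τ
  have h2 : ((b.2 : ℕ) : ℚ) ≠ 0 := by
    have := b.2.pos
    positivity
  have h3 : ((τ.count b : ℚ) + 1) ≠ 0 := by positivity
  rw [pow_succ]
  push_cast
  field_simp

def FF (d : ℕ) : Finset BB := Finset.Icc 1 d.toPNat' ×ˢ Finset.Icc 1 d.toPNat'

lemma mem_FF_of_KN {d : ℕ} {p : BB} (hp : p ∈ KN d) : p ∈ FF d := by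
  unfold KN at hp
  exact (Finset.mem_filter.mp hp).1

lemma block_mem_FF {d : ℕ} {τ : Multiset BB} (hτ : wtT τ = d) {b : BB} (hb : b ∈ τ) :
    b ∈ FF d := by
  have hw := block_le_wtT b τ hb
  have hpos : 0 < (b.1 : ℕ) * (b.2 : ℕ) := by positivity
  have hd : 0 < d := by omega
  refine Finset.mem_product.mpr ⟨Finset.mem_Icc.mpr ⟨b.1.one_le, ?_⟩,
    Finset.mem_Icc.mpr ⟨b.2.one_le, ?_⟩⟩
  · rw [← PNat.coe_le_coe, PNat.toPNat'_coe hd]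
    have := Nat.le_mul_of_pos_right (b.1 : ℕ) b.2.pos
    omega
  · rw [← PNat.coe_le_coe, PNat.toPNat'_coe hd]
    have := Nat.le_mul_of_pos_left (b.2 : ℕ) b.1.pos
    omega

lemma R_rec (r d : ℕ) (hd : 0 < d) :
    (d : ℚ) • Rr r d
      = - ∑ p ∈ KN d,
          ((p.1 : ℕ) : ℚ) • (pIn p.1 (r * (p.2 : ℕ)) * Rr r (d - (p.1 : ℕ) * (p.2 : ℕ))) := by
  unfold Rr
  rw [Finset.smul_sum]
  have hL : ∀ τ ∈ Ts d, (d : ℚ) • wS r τ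
      = ∑ b ∈ τ.toFinset, ((τ.count b * ((b.1 : ℕ) * (b.2 : ℕ)) : ℕ) : ℚ) • wS r τ := by
    intro τ hτ
    rw [← Finset.sum_smul]
    congr 1
    have hwt : wtT τ = ∑ b ∈ τ.toFinset, τ.count b * ((b.1 : ℕ) * (b.2 : ℕ)) := by
      unfold wtT
      rw [Finset.sum_multiset_map_count]
      simp [smul_eq_mul]
    rw [← mem_Ts.mp hτ, hwt]
    push_cast
    rfl
  rw [Finset.sum_congr rfl hL]
  -- turn LHS into a sum over pairs
  have hD1 : (∑ τ ∈ Ts d, ∑ b ∈ τ.toFinset,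
        ((τ.count b * ((b.1 : ℕ) * (b.2 : ℕ)) : ℕ) : ℚ) • wS r τ)
      = ∑ q ∈ (Ts d ×ˢ FF d).filter (fun q => q.2 ∈ q.1),
          ((q.1.count q.2 * ((q.2.1 : ℕ) * (q.2.2 : ℕ)) : ℕ) : ℚ) • wS r q.1 := by
    rw [Finset.sum_filter, Finset.sum_product]
    refine Finset.sum_congr rfl fun τ hτ => ?_
    have hTF : τ.toFinset = (FF d).filter (fun b => b ∈ τ) := by
      apply Finset.ext; intro b
      rw [Multiset.mem_toFinset, Finset.mem_filter]
      exact ⟨fun h => ⟨block_mem_FF (mem_Ts.mp hτ) h, h⟩, And.right⟩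
    rw [hTF, Finset.sum_filter]
  rw [hD1]
  -- turn RHS into a sum over pairs
  have hR : ∀ p ∈ KN d,
      ((p.1 : ℕ) : ℚ) • (pIn p.1 (r * (p.2 : ℕ)) * ∑ τ ∈ Ts (d - (p.1 : ℕ) * (p.2 : ℕ)), wS r τ)
        = ∑ τ' ∈ (TsLe d).filter (fun τ => wtT τ = d - (p.1 : ℕ) * (p.2 : ℕ)),
            ((p.1 : ℕ) : ℚ) • (pIn p.1 (r * (p.2 : ℕ)) * wS r τ') := by
    intro p hp
    rw [← sum_Ts (Nat.sub_le d _) (fun τ => wS r τ), Finset.mul_sum, Finset.smul_sum]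
  rw [Finset.sum_congr rfl hR]
  have hD2 : (∑ p ∈ KN d,
        ∑ τ' ∈ (TsLe d).filter (fun τ => wtT τ = d - (p.1 : ℕ) * (p.2 : ℕ)),
          ((p.1 : ℕ) : ℚ) • (pIn p.1 (r * (p.2 : ℕ)) * wS r τ'))
      = ∑ q ∈ (KN d ×ˢ TsLe d).filter (fun q => wtT q.2 = d - (q.1.1 : ℕ) * (q.1.2 : ℕ)),
          ((q.1.1 : ℕ) : ℚ) • (pIn q.1.1 (r * (q.1.2 : ℕ)) * wS r q.2) := by
    rw [Finset.sum_filter, Finset.sum_product]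
    exact Finset.sum_congr rfl fun p _ => Finset.sum_filter _ _
  rw [hD2, ← Finset.sum_neg_distrib]
  refine Finset.sum_nbij' (i := fun q => (q.2, q.1.erase q.2))
    (j := fun q => (q.1 ::ₘ q.2, q.1)) ?_ ?_ ?_ ?_ ?_
  · intro q hq
    obtain ⟨hq1, hq2⟩ := Finset.mem_filter.mp hq
    obtain ⟨hqt, hqf⟩ := Finset.mem_product.mp hq1
    have hwt : wtT q.1 = d := mem_Ts.mp hqt
    have hle := block_le_wtT q.2 q.1 hq2
    have herase : wtT (q.1.erase q.2) = d - (q.2.1 : ℕ) * (q.2.2 : ℕ) := by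
      have hc : q.2 ::ₘ q.1.erase q.2 = q.1 := Multiset.cons_erase hq2
      have := wtT_cons q.2 (q.1.erase q.2)
      rw [hc] at this
      omega
    refine Finset.mem_filter.mpr ⟨Finset.mem_product.mpr
      ⟨mem_KN.mpr (by rw [← hwt]; exact hle), mem_TsLe (Nat.sub_le _ _) herase⟩, herase⟩
  · intro q hq
    obtain ⟨hq1, hq2⟩ := Finset.mem_filter.mp hq
    obtain ⟨hqk, hqt⟩ := Finset.mem_product.mp hq1
    have hkm := mem_KN.mp hqk
    have hwt : wtT (q.1 ::ₘ q.2) = d := by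
      rw [wtT_cons, hq2]
      omega
    refine Finset.mem_filter.mpr ⟨Finset.mem_product.mpr
      ⟨mem_Ts.mpr hwt, mem_FF_of_KN hqk⟩, Multiset.mem_cons_self _ _⟩
  · intro q hq
    obtain ⟨hq1, hq2⟩ := Finset.mem_filter.mp hq
    rw [Prod.ext_iff]
    exact ⟨Multiset.cons_erase hq2, rfl⟩
  · intro q hq
    exact Prod.ext rfl (Multiset.erase_cons_head _ _)
  · intro q hq
    obtain ⟨hq1, hq2⟩ := Finset.mem_filter.mp hq
    rw [← neg_smul]
    conv_lhs => rw [← Multiset.cons_erase hq2, Multiset.count_cons_self]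
    exact key r q.2 (q.1.erase q.2)

lemma EE_zero : EE 0 = 1 := by
  apply MvPowerSeries.ext; intro e
  rw [MvPowerSeries.coeff_one, ← coeff_eq, EE_apply]
  by_cases he : e = 0
  · subst he
    rw [if_pos ⟨fun v => by simp, by simp [wdeg]⟩, if_pos rfl]
    simp
  · rw [if_neg he, if_neg (fun hc => he (wdeg_eq_zero e hc.2))]

lemma main_lemma (r : ℕ) (hr : 0 < r) (d : ℕ) : powSub r (EE d) = Rr r d := by
  induction d using Nat.strong_induction_on with
  | _ d IH =>
    rcases Nat.eq_zero_or_pos d with rfl | hd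
    · rw [EE_zero, powSub_one r hr]
      unfold Rr
      rw [Ts_zero, Finset.sum_singleton]
      unfold wS
      rw [zT_zero, pTr_zero]
      simp
    · have h1 := congrArg (powSub r) (E_rec d)
      rw [powSub_smul] at h1
      have h2 : powSub r (-∑ p ∈ KN d,
            ((p.1 : ℕ) : ℚ) • (pIn p.1 (p.2 : ℕ) * EE (d - (p.1 : ℕ) * (p.2 : ℕ))))
          = -∑ p ∈ KN d,
            ((p.1 : ℕ) : ℚ) • (pIn p.1 (r * (p.2 : ℕ)) * Rr r (d - (p.1 : ℕ) * (p.2 : ℕ))) := by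
        have e1 : powSub r (-∑ p ∈ KN d,
              ((p.1 : ℕ) : ℚ) • (pIn p.1 (p.2 : ℕ) * EE (d - (p.1 : ℕ) * (p.2 : ℕ))))
            = -∑ p ∈ KN d, (powSubL r)
              (((p.1 : ℕ) : ℚ) • (pIn p.1 (p.2 : ℕ) * EE (d - (p.1 : ℕ) * (p.2 : ℕ)))) := by
          rw [show powSub r (-∑ p ∈ KN d,
              ((p.1 : ℕ) : ℚ) • (pIn p.1 (p.2 : ℕ) * EE (d - (p.1 : ℕ) * (p.2 : ℕ))))
            = (powSubL r) (-∑ p ∈ KN d,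
              ((p.1 : ℕ) : ℚ) • (pIn p.1 (p.2 : ℕ) * EE (d - (p.1 : ℕ) * (p.2 : ℕ)))) from rfl,
            map_neg, map_sum]
        rw [e1]
        congr 1
        refine Finset.sum_congr rfl fun p hp => ?_
        have hkm : 0 < (p.1 : ℕ) * (p.2 : ℕ) := by positivity
        have hlt : d - (p.1 : ℕ) * (p.2 : ℕ) < d := by omega
        rw [map_smul]
        congr 1
        show powSub r (pIn p.1 (p.2 : ℕ) * EE (d - (p.1 : ℕ) * (p.2 : ℕ))) = _
        rw [powSub_mul r hr, powSub_pIn r hr, IH _ hlt]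
      rw [h2, ← R_rec r d hd] at h1
      have hnd : ((d : ℕ) : ℚ) ≠ 0 := Nat.cast_ne_zero.mpr (by omega)
      have hdc := congrArg (fun x => ((d : ℕ) : ℚ)⁻¹ • x) h1
      simpa [inv_smul_smul₀ hnd] using hdc

end Aux8
/-- For positive integers `d, r`:
`E_{d^r} = Σ_{τ ⊩ d} (−1)^{ℓ(τ)} p^⊗_{τ^r} / z^⊗_τ`, summed over all types `τ` of
weight `d`, where `ℓ(τ)` is the number of blocks of `τ` counted with multiplicity. -/
theorem E_block_in_pTensor (d r : ℕ) (hd : 0 < d) (hr : 0 < r) :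
    powSub r (EE d)
      = ∑ᶠ τ : {τ : Multiset (ℕ+ × ℕ+) // wtT τ = d},
          ((-1 : ℚ) ^ (τ.1.card) * (zT τ.1)⁻¹) • pTr τ.1 r := by
  rw [main_lemma r hr d,
    finsum_subtype_eq_finsum_cond
      (f := fun τ : Multiset (ℕ+ × ℕ+) => ((-1 : ℚ) ^ Multiset.card τ * (zT τ)⁻¹) • pTr τ r)
      (fun τ => wtT τ = d),
    finsum_cond_eq_sum_of_cond_iff _ (fun {x} _ => mem_Ts.symm)]
  rfl
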